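/- arXiv:2012.10406 — 2 statements merged into one kernel-verified Lean document; each statement's English description precedes it below -/
import Mathlib

section
/- Let (b, B, m, μ) be an admissible parameter set. Then for every u ∈ K: (a) |F(u)| ≤ (‖b‖ + ∫ ‖ξ‖² m(dξ)) (1 + ‖u‖²); and (b) there exists a unique element R(u) ∈ H with ⟨R(u),x⟩ = ⟨B*(u),x⟩ − ∫ (e^{−⟨ξ,u⟩} − 1 + ⟨χ(ξ),u⟩) ‖ξ‖^{−2} ν_x(dξ) for all x ∈ K, and it satisfies ‖R(u)‖ ≤ (‖B*‖_{L(H)} + ‖μ(K∖{0})‖) (1 + ‖u‖²). -/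
open MeasureTheory Filter
open scoped RealInnerProductSpace Topology ENNReal

noncomputable section

def IsSelfDualCone {H : Type*} [NormedAddCommGroup H] [InnerProductSpace ℝ H]
    (K : Set H) : Prop :=
  K = {x : H | ∀ y ∈ K, 0 ≤ ⟪x, y⟫}

def trunc {H : Type*} [NormedAddCommGroup H] [InnerProductSpace ℝ H] (ξ : H) : H :=
  if ‖ξ‖ ≤ 1 then ξ else 0

structure AdmissibleParams (H : Type*) [NormedAddCommGroup H] [InnerProductSpace ℝ H]
    [CompleteSpace H] [MeasurableSpace H] [BorelSpace H] (K : Set H) where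
  b : H
  B : H →L[ℝ] H
  m : Measure H
  ν : H → Measure H
  muVec : Set H → H
  m_support : m ((K \ {0})ᶜ) = 0
  m_sq : IntegrableOn (fun ξ : H => ‖ξ‖ ^ 2) (K \ {0}) m
  m_chi : ∀ h : H, IntegrableOn (fun ξ : H => |⟪trunc ξ, h⟫|) (K \ {0}) m
  m_Im : ∃ Im : H, ∀ h : H, ⟪Im, h⟫ = ∫ ξ in K \ {0}, ⟪trunc ξ, h⟫ ∂m
  b_drift : ∀ v ∈ K, 0 ≤ ⟪b, v⟫ - ∫ ξ in K \ {0}, ⟪trunc ξ, v⟫ ∂m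
  ν_finite : ∀ x ∈ K, IsFiniteMeasure (ν x)
  ν_support : ∀ x ∈ K, ν x ((K \ {0})ᶜ) = 0
  ν_add : ∀ x ∈ K, ∀ y ∈ K, ν (x + y) = ν x + ν y
  ν_smul : ∀ x ∈ K, ∀ c : ℝ, 0 ≤ c → ν (c • x) = ENNReal.ofReal c • ν x
  ν_int : ∀ u ∈ K, ∀ x ∈ K, ⟪u, x⟫ = 0 →
    IntegrableOn (fun ξ : H => ⟪trunc ξ, u⟫ / ‖ξ‖ ^ 2) (K \ {0}) (ν x)
  B_quasi : ∀ u ∈ K, ∀ x ∈ K, ⟪u, x⟫ = 0 →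
    0 ≤ ⟪ContinuousLinearMap.adjoint B u, x⟫
      - ∫ ξ in K \ {0}, ⟪trunc ξ, u⟫ / ‖ξ‖ ^ 2 ∂(ν x)
  muVec_mem : ∀ S : Set H, MeasurableSet S → muVec S ∈ K
  muVec_spec : ∀ S : Set H, MeasurableSet S → ∀ x ∈ K, ⟪muVec S, x⟫ = (ν x S).toReal

section aux
variable {H : Type*} [NormedAddCommGroup H] [InnerProductSpace ℝ H] {K : Set H}

lemma sdc_inner_nonneg (hK : IsSelfDualCone K) {x y : H} (hx : x ∈ K) (hy : y ∈ K) :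
    0 ≤ ⟪x, y⟫ := by
  rw [hK] at hx; exact hx y hy

lemma sdc_mem (hK : IsSelfDualCone K) {x : H} (h : ∀ y ∈ K, 0 ≤ ⟪x, y⟫) : x ∈ K := by
  rw [hK]; exact h

lemma sdc_zero (hK : IsSelfDualCone K) : (0 : H) ∈ K :=
  sdc_mem hK fun y _ => by simp

lemma sdc_add (hK : IsSelfDualCone K) {x y : H} (hx : x ∈ K) (hy : y ∈ K) : x + y ∈ K :=
  sdc_mem hK fun z hz => by
    rw [inner_add_left]
    exact add_nonneg (sdc_inner_nonneg hK hx hz) (sdc_inner_nonneg hK hy hz)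

lemma sdc_smul (hK : IsSelfDualCone K) {x : H} {c : ℝ} (hc : 0 ≤ c) (hx : x ∈ K) :
    c • x ∈ K :=
  sdc_mem hK fun z hz => by
    rw [real_inner_smul_left]
    exact mul_nonneg hc (sdc_inner_nonneg hK hx hz)

lemma sdc_closed (hK : IsSelfDualCone K) : IsClosed K := by
  have : K = ⋂ y ∈ K, {x : H | 0 ≤ ⟪x, y⟫} := by
    ext x
    simp only [Set.mem_iInter, Set.mem_setOf_eq]
    exact ⟨fun hx y hy => sdc_inner_nonneg hK hx hy, fun h => sdc_mem hK h⟩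
  rw [this]
  exact isClosed_biInter fun y _ =>
    isClosed_le continuous_const (continuous_id.inner continuous_const)

lemma sdc_convex (hK : IsSelfDualCone K) : Convex ℝ K := by
  intro x hx y hy a b ha hb _
  exact sdc_add hK (sdc_smul hK ha hx) (sdc_smul hK hb hy)

/-- Moreau decomposition for self-dual cones. -/
lemma sdc_moreau [CompleteSpace H] (hK : IsSelfDualCone K) (z : H) :
    ∃ x ∈ K, ∃ y ∈ K, z = x - y ∧ ⟪x, y⟫ = 0 := by
  obtain ⟨x, hxK, hmin⟩ := exists_norm_eq_iInf_of_complete_convex ⟨0, sdc_zero hK⟩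
    ((sdc_closed hK).isComplete) (sdc_convex hK) z
  have hchar : ∀ w ∈ K, ⟪z - x, w - x⟫ ≤ 0 :=
    (norm_eq_iInf_iff_real_inner_le_zero (sdc_convex hK) hxK).1 hmin
  set y := x - z with hy
  have h0 : ⟪z - x, -x⟫ ≤ 0 := by simpa using hchar 0 (sdc_zero hK)
  have h2 : ⟪z - x, x⟫ ≤ 0 := by
    have := hchar ((2 : ℝ) • x) (sdc_smul hK (by norm_num) hxK)
    have hx2 : (2 : ℝ) • x - x = x := by module
    rwa [hx2] at this
  have h0' : ⟪z - x, x⟫ = 0 :=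
    le_antisymm h2 (by rwa [inner_neg_right, neg_nonpos] at h0)
  have horth : ⟪x, y⟫ = 0 := by
    have hxz : x - z = -(z - x) := by abel
    rw [hy, real_inner_comm, hxz, inner_neg_left, h0', neg_zero]
  have hyK : y ∈ K := by
    refine sdc_mem hK fun w hw => ?_
    have := hchar w hw
    rw [inner_sub_right] at this
    have : ⟪z - x, w⟫ ≤ 0 := by linarith
    rw [hy, inner_sub_left]
    rw [inner_sub_left] at this
    linarith
  exact ⟨x, hxK, y, hyK, by rw [hy]; abel, horth⟩

lemma exp_taylor_bound {t : ℝ} (ht : 0 ≤ t) : |Real.exp (-t) - 1 + t| ≤ t ^ 2 := by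
  have hlow : 0 ≤ Real.exp (-t) - 1 + t := by
    have := Real.add_one_le_exp (-t); linarith
  rw [abs_of_nonneg hlow]
  rcases le_or_gt t 1 with h1 | h1
  · have hb := Real.exp_bound (x := -t) (by rwa [abs_neg, abs_of_nonneg ht]) (n := 2) (by norm_num)
    have : |Real.exp (-t) - (1 + -t)| ≤ t ^ 2 * (3 / (2 * 2)) := by
      simpa [Finset.sum_range_succ, abs_neg, abs_of_nonneg ht, Nat.factorial] using hb
    have h2 := abs_le.1 this
    nlinarith [sq_nonneg t]
  · have : Real.exp (-t) ≤ 1 := by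
      rw [Real.exp_le_one_iff]; linarith
    nlinarith

lemma inner_trunc (ξ u : H) : ⟪trunc ξ, u⟫ = if ‖ξ‖ ≤ 1 then ⟪ξ, u⟫ else 0 := by
  unfold trunc; split <;> simp

/-- Pointwise bound on the compensator integrand. -/
lemma g_bound (hK : IsSelfDualCone K) {u : H} (hu : u ∈ K) {ξ : H} (hξK : ξ ∈ K) :
    |Real.exp (-⟪ξ, u⟫) - 1 + ⟪trunc ξ, u⟫| ≤ ‖ξ‖ ^ 2 * (1 + ‖u‖ ^ 2) := by
  have ht : 0 ≤ ⟪ξ, u⟫ := sdc_inner_nonneg hK hξK hu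
  have hcs : ⟪ξ, u⟫ ≤ ‖ξ‖ * ‖u‖ := real_inner_le_norm ξ u
  rw [inner_trunc]
  split
  · next h =>
    calc |Real.exp (-⟪ξ, u⟫) - 1 + ⟪ξ, u⟫| ≤ ⟪ξ, u⟫ ^ 2 := exp_taylor_bound ht
      _ ≤ (‖ξ‖ * ‖u‖) ^ 2 := by nlinarith
      _ ≤ ‖ξ‖ ^ 2 * (1 + ‖u‖ ^ 2) := by nlinarith [sq_nonneg ‖ξ‖]
  · next h =>
    push_neg at h
    have he : Real.exp (-⟪ξ, u⟫) ≤ 1 := by rw [Real.exp_le_one_iff]; linarith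
    have he' : 0 < Real.exp (-⟪ξ, u⟫) := Real.exp_pos _
    rw [add_zero, abs_of_nonpos (by linarith)]
    nlinarith [sq_nonneg ‖u‖, norm_nonneg ξ]

lemma g_meas [MeasurableSpace H] [BorelSpace H] (u : H) :
    Measurable (fun ξ : H => Real.exp (-⟪ξ, u⟫) - 1 + ⟪trunc ξ, u⟫) := by
  have h1 : Measurable (fun ξ : H => ⟪ξ, u⟫) :=
    (continuous_id.inner continuous_const).measurable
  have h2 : Measurable (fun ξ : H => ⟪trunc ξ, u⟫) := by
    simp only [inner_trunc]
    exact Measurable.ite (measurableSet_le measurable_norm measurable_const) h1 measurable_const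
  exact ((Real.measurable_exp.comp h1.neg).sub measurable_const).add h2

end aux

set_option maxHeartbeats 1600000 in
/-- Quadratic growth bounds for `F` and `R`: for every `u ∈ K`,
`|F(u)| ≤ (‖b‖ + ∫‖ξ‖² m(dξ))(1 + ‖u‖²)`, there is a unique `R(u) ∈ H` with
`⟨R(u),x⟩ = ⟨B*(u),x⟩ − ∫ (e^{−⟨ξ,u⟩} − 1 + ⟨χ(ξ),u⟩)‖ξ‖⁻² ν_x(dξ)` for all `x ∈ K`,
and it satisfies `‖R(u)‖ ≤ (‖B*‖ + ‖μ(K∖{0})‖)(1 + ‖u‖²)`. -/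
theorem stmt_1 {H : Type*} [NormedAddCommGroup H] [InnerProductSpace ℝ H] [CompleteSpace H]
    [MeasurableSpace H] [BorelSpace H] (K : Set H)
    (hK : IsSelfDualCone K) (hKgen : ∀ z : H, ∃ x ∈ K, ∃ y ∈ K, z = x - y)
    (p : AdmissibleParams H K) (u : H) (hu : u ∈ K) :
    |⟪p.b, u⟫ - ∫ ξ in K \ {0}, (Real.exp (-⟪ξ, u⟫) - 1 + ⟪trunc ξ, u⟫) ∂p.m|
      ≤ (‖p.b‖ + ∫ ξ in K \ {0}, ‖ξ‖ ^ 2 ∂p.m) * (1 + ‖u‖ ^ 2) ∧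
    (∃! Ru : H, ∀ x ∈ K, ⟪Ru, x⟫ = ⟪ContinuousLinearMap.adjoint p.B u, x⟫
        - ∫ ξ in K \ {0}, (Real.exp (-⟪ξ, u⟫) - 1 + ⟪trunc ξ, u⟫) / ‖ξ‖ ^ 2 ∂(p.ν x)) ∧
    (∀ Ru : H, (∀ x ∈ K, ⟪Ru, x⟫ = ⟪ContinuousLinearMap.adjoint p.B u, x⟫
        - ∫ ξ in K \ {0}, (Real.exp (-⟪ξ, u⟫) - 1 + ⟪trunc ξ, u⟫) / ‖ξ‖ ^ 2 ∂(p.ν x)) →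
      ‖Ru‖ ≤ (‖ContinuousLinearMap.adjoint p.B‖ + ‖p.muVec (K \ {0})‖) * (1 + ‖u‖ ^ 2)) := by
  have hKm : MeasurableSet (K \ {0}) :=
    (sdc_closed hK).measurableSet.diff isClosed_singleton.measurableSet
  set g : H → ℝ := fun ξ => Real.exp (-⟪ξ, u⟫) - 1 + ⟪trunc ξ, u⟫ with hg
  have hbound : ∀ ξ ∈ K \ {0}, |g ξ| ≤ ‖ξ‖ ^ 2 * (1 + ‖u‖ ^ 2) :=
    fun ξ hξ => g_bound hK hu hξ.1
  have hu2 : (0:ℝ) < 1 + ‖u‖ ^ 2 := by positivity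
  constructor
  · -- Part (a)
    have hIg : IntegrableOn g (K \ {0}) p.m := by
      refine Integrable.mono' (p.m_sq.mul_const (1 + ‖u‖ ^ 2))
        (g_meas u).aestronglyMeasurable ?_
      filter_upwards [ae_restrict_mem hKm] with ξ hξ
      simpa [Real.norm_eq_abs] using hbound ξ hξ
    have h1 : |∫ ξ in K \ {0}, g ξ ∂p.m| ≤ (∫ ξ in K \ {0}, ‖ξ‖ ^ 2 ∂p.m) * (1 + ‖u‖ ^ 2) := by
      calc |∫ ξ in K \ {0}, g ξ ∂p.m| ≤ ∫ ξ in K \ {0}, |g ξ| ∂p.m := by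
            simpa [Real.norm_eq_abs] using
              norm_integral_le_integral_norm (μ := p.m.restrict (K \ {0})) g
        _ ≤ ∫ ξ in K \ {0}, ‖ξ‖ ^ 2 * (1 + ‖u‖ ^ 2) ∂p.m := by
            refine integral_mono_ae hIg.abs (p.m_sq.mul_const _) ?_
            filter_upwards [ae_restrict_mem hKm] with ξ hξ using hbound ξ hξ
        _ = (∫ ξ in K \ {0}, ‖ξ‖ ^ 2 ∂p.m) * (1 + ‖u‖ ^ 2) := integral_mul_const _ _
    have h2 : |⟪p.b, u⟫| ≤ ‖p.b‖ * ‖u‖ := abs_real_inner_le_norm _ _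
    have h3 : (0:ℝ) ≤ ∫ ξ in K \ {0}, ‖ξ‖ ^ 2 ∂p.m :=
      integral_nonneg fun ξ => by positivity
    have habs := abs_sub (⟪p.b, u⟫) (∫ ξ in K \ {0}, g ξ ∂p.m)
    have hub : ‖u‖ ≤ 1 + ‖u‖ ^ 2 := by nlinarith [sq_nonneg (‖u‖ - 1), norm_nonneg u]
    calc |⟪p.b, u⟫ - ∫ ξ in K \ {0}, g ξ ∂p.m|
        ≤ |⟪p.b, u⟫| + |∫ ξ in K \ {0}, g ξ ∂p.m| := abs_sub _ _
      _ ≤ ‖p.b‖ * ‖u‖ + (∫ ξ in K \ {0}, ‖ξ‖ ^ 2 ∂p.m) * (1 + ‖u‖ ^ 2) := by linarith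
      _ ≤ (‖p.b‖ + ∫ ξ in K \ {0}, ‖ξ‖ ^ 2 ∂p.m) * (1 + ‖u‖ ^ 2) := by
          nlinarith [norm_nonneg p.b]
  · -- Part (b)
    set Bu := ContinuousLinearMap.adjoint p.B u with hBu
    set φ : H → ℝ := fun x => ⟪Bu, x⟫ - ∫ ξ in K \ {0}, g ξ / ‖ξ‖ ^ 2 ∂(p.ν x) with hφ
    set μK := p.muVec (K \ {0}) with hμK
    have hgd_meas : Measurable (fun ξ : H => g ξ / ‖ξ‖ ^ 2) :=
      (g_meas u).div (measurable_norm.pow_const 2)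
    have hbd : ∀ ξ ∈ K \ {0}, |g ξ| / ‖ξ‖ ^ 2 ≤ 1 + ‖u‖ ^ 2 := by
      intro ξ hξ
      have hξ0 : (0:ℝ) < ‖ξ‖ ^ 2 := pow_pos (norm_pos_iff.2 hξ.2) 2
      rw [div_le_iff₀ hξ0]
      calc |g ξ| ≤ ‖ξ‖ ^ 2 * (1 + ‖u‖ ^ 2) := hbound ξ hξ
        _ = (1 + ‖u‖ ^ 2) * ‖ξ‖ ^ 2 := by ring
    have hIntb : ∀ x ∈ K, Integrable (fun ξ => g ξ / ‖ξ‖ ^ 2) ((p.ν x).restrict (K \ {0})) := by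
      intro x hx
      haveI := p.ν_finite x hx
      refine Integrable.mono' (integrable_const (1 + ‖u‖ ^ 2))
        hgd_meas.aestronglyMeasurable ?_
      filter_upwards [ae_restrict_mem hKm] with ξ hξ
      simpa [Real.norm_eq_abs, abs_div] using hbd ξ hξ
    have hIbound : ∀ x ∈ K,
        |∫ ξ in K \ {0}, g ξ / ‖ξ‖ ^ 2 ∂(p.ν x)| ≤ (1 + ‖u‖ ^ 2) * ⟪μK, x⟫ := by
      intro x hx
      haveI := p.ν_finite x hx
      have := norm_integral_le_of_norm_le_const (μ := (p.ν x).restrict (K \ {0}))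
        (f := fun ξ => g ξ / ‖ξ‖ ^ 2) (C := 1 + ‖u‖ ^ 2) ?_
      · rw [Real.norm_eq_abs] at this
        rw [hμK, p.muVec_spec _ hKm x hx]
        simpa [Measure.restrict_apply_univ, Measure.real] using this
      · filter_upwards [ae_restrict_mem hKm] with ξ hξ
        simpa [Real.norm_eq_abs, abs_div] using hbd ξ hξ
    have hμKx : ∀ x ∈ K, ⟪μK, x⟫ ≤ ‖μK‖ * ‖x‖ := fun x _ => real_inner_le_norm _ _
    have hμKnn : ∀ x ∈ K, 0 ≤ ⟪μK, x⟫ := fun x hx =>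
      sdc_inner_nonneg hK (p.muVec_mem _ hKm) hx
    have hφ_bound : ∀ x ∈ K, |φ x| ≤ (‖Bu‖ + (1 + ‖u‖ ^ 2) * ‖μK‖) * ‖x‖ := by
      intro x hx
      have h1 : |⟪Bu, x⟫| ≤ ‖Bu‖ * ‖x‖ := abs_real_inner_le_norm _ _
      have h2 := hIbound x hx
      have h3 := hμKx x hx
      calc |φ x| ≤ |⟪Bu, x⟫| + |∫ ξ in K \ {0}, g ξ / ‖ξ‖ ^ 2 ∂(p.ν x)| := abs_sub _ _
        _ ≤ ‖Bu‖ * ‖x‖ + (1 + ‖u‖ ^ 2) * (‖μK‖ * ‖x‖) := by nlinarith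
        _ = (‖Bu‖ + (1 + ‖u‖ ^ 2) * ‖μK‖) * ‖x‖ := by ring
    have hφ_add : ∀ x ∈ K, ∀ y ∈ K, φ (x + y) = φ x + φ y := by
      intro x hx y hy
      have hν : p.ν (x + y) = p.ν x + p.ν y := p.ν_add x hx y hy
      simp only [hφ, inner_add_right]
      rw [hν, Measure.restrict_add, integral_add_measure (hIntb x hx) (hIntb y hy)]
      ring
    have hφ_smul : ∀ x ∈ K, ∀ c : ℝ, 0 ≤ c → φ (c • x) = c * φ x := by
      intro x hx c hc
      have hν : p.ν (c • x) = ENNReal.ofReal c • p.ν x := p.ν_smul x hx c hc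
      simp only [hφ, real_inner_smul_right]
      rw [hν, Measure.restrict_smul, integral_smul_measure, ENNReal.toReal_ofReal hc,
        smul_eq_mul]
      ring
    have hφ0 : φ 0 = 0 := by
      have := hφ_smul 0 (sdc_zero hK) 0 le_rfl
      simpa using this
    have hφ_diff : ∀ x ∈ K, ∀ y ∈ K, ∀ x' ∈ K, ∀ y' ∈ K, x - y = x' - y' →
        φ x - φ y = φ x' - φ y' := by
      intro x hx y hy x' hx' y' hy' heq
      have hsum : x + y' = x' + y := sub_eq_sub_iff_add_eq_add.1 heq
      have := hφ_add x hx y' hy'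
      rw [hsum, hφ_add x' hx' y hy] at this
      linarith
    -- choose Moreau decompositions
    choose xd hxd yd hyd hzd hod using fun z : H => sdc_moreau hK z
    set ψ : H → ℝ := fun z => φ (xd z) - φ (yd z) with hψ
    have hψ_spec : ∀ z : H, ∀ x ∈ K, ∀ y ∈ K, z = x - y → ψ z = φ x - φ y := by
      intro z x hx y hy hzeq
      exact hφ_diff (xd z) (hxd z) (yd z) (hyd z) x hx y hy (by rw [← hzd z, hzeq])
    have hψ_add : ∀ z w : H, ψ (z + w) = ψ z + ψ w := by
      intro z w
      have h1 : z + w = (xd z + xd w) - (yd z + yd w) := by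
        conv_lhs => rw [hzd z, hzd w]
        abel
      rw [hψ_spec (z + w) _ (sdc_add hK (hxd z) (hxd w)) _ (sdc_add hK (hyd z) (hyd w)) h1,
        hφ_add _ (hxd z) _ (hxd w), hφ_add _ (hyd z) _ (hyd w)]
      simp only [hψ]
      ring
    have hψ_smul : ∀ (c : ℝ) (z : H), ψ (c • z) = c * ψ z := by
      intro c z
      rcases le_or_gt 0 c with hc | hc
      · have h1 : c • z = (c • xd z) - (c • yd z) := by
          conv_lhs => rw [hzd z]
          module
        rw [hψ_spec (c • z) _ (sdc_smul hK hc (hxd z)) _ (sdc_smul hK hc (hyd z)) h1,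
          hφ_smul _ (hxd z) c hc, hφ_smul _ (hyd z) c hc]
        simp only [hψ]; ring
      · have hc' : 0 ≤ -c := by linarith
        have h1 : c • z = ((-c) • yd z) - ((-c) • xd z) := by
          conv_lhs => rw [hzd z]
          module
        rw [hψ_spec (c • z) _ (sdc_smul hK hc' (hyd z)) _ (sdc_smul hK hc' (hxd z)) h1,
          hφ_smul _ (hyd z) _ hc', hφ_smul _ (hxd z) _ hc']
        simp only [hψ]; ring
    have hψ_bound : ∀ z : H, |ψ z| ≤ 2 * ((‖Bu‖ + (1 + ‖u‖ ^ 2) * ‖μK‖)) * ‖z‖ := by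
      intro z
      have hnx : ‖xd z‖ ≤ ‖z‖ ∧ ‖yd z‖ ≤ ‖z‖ := by
        have h := norm_sub_sq_real (xd z) (yd z)
        rw [← hzd z, hod z] at h
        constructor <;> [skip; skip] <;>
          nlinarith [norm_nonneg (xd z), norm_nonneg (yd z), norm_nonneg z,
            sq_nonneg (‖xd z‖ + ‖z‖), sq_nonneg (‖yd z‖ + ‖z‖)]
      have h1 := hφ_bound (xd z) (hxd z)
      have h2 := hφ_bound (yd z) (hyd z)
      have hC : 0 ≤ ‖Bu‖ + (1 + ‖u‖ ^ 2) * ‖μK‖ := by positivity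
      have := abs_sub (φ (xd z)) (φ (yd z))
      simp only [hψ]
      nlinarith [abs_nonneg (φ (xd z)), abs_nonneg (φ (yd z))]
    set L : H →ₗ[ℝ] ℝ :=
      { toFun := ψ, map_add' := hψ_add, map_smul' := fun c z => hψ_smul c z } with hL
    set Lc : H →L[ℝ] ℝ := LinearMap.mkContinuous L
      (2 * ((‖Bu‖ + (1 + ‖u‖ ^ 2) * ‖μK‖)))
      (fun z => by rw [Real.norm_eq_abs]; exact hψ_bound z) with hLc
    set Ru : H := (InnerProductSpace.toDual ℝ H).symm Lc with hRu
    have hRu_inner : ∀ z : H, ⟪Ru, z⟫ = ψ z := fun z =>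
      InnerProductSpace.toDual_symm_apply
    have hRu_spec : ∀ x ∈ K, ⟪Ru, x⟫ = φ x := by
      intro x hx
      rw [hRu_inner x, hψ_spec x x hx 0 (sdc_zero hK) (by abel), hφ0, sub_zero]
    constructor
    · refine ⟨Ru, fun x hx => hRu_spec x hx, ?_⟩
      intro Ru' hRu'
      have hdiff : ∀ z : H, ⟪Ru' - Ru, z⟫ = 0 := by
        intro z
        obtain ⟨x, hx, y, hy, hz⟩ := hKgen z
        have h1 : ⟪Ru' - Ru, x⟫ = 0 := by
          rw [inner_sub_left, hRu' x hx, hRu_spec x hx, hφ]; ring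
        have h2 : ⟪Ru' - Ru, y⟫ = 0 := by
          rw [inner_sub_left, hRu' y hy, hRu_spec y hy, hφ]; ring
        rw [hz, inner_sub_right, h1, h2, sub_zero]
      have : Ru' - Ru = 0 := by
        have := hdiff (Ru' - Ru)
        rwa [real_inner_self_eq_norm_sq, pow_eq_zero_iff two_ne_zero, norm_eq_zero] at this
      rw [sub_eq_zero] at this
      exact this
    · -- norm bound
      intro R hR
      obtain ⟨x, hx, y, hy, hReq, hRorth⟩ := sdc_moreau hK R
      have hRφ : ∀ v ∈ K, ⟪R, v⟫ = φ v := fun v hv => hR v hv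
      have hnormeq : ‖x + y‖ = ‖R‖ := by
        rw [hReq]
        refine (pow_left_inj₀ (norm_nonneg _) (norm_nonneg _) two_ne_zero).1 ?_
        rw [norm_add_sq_real, norm_sub_sq_real, hRorth]
        ring
      have hIx := hIbound x hx
      have hIy := hIbound y hy
      have hinner_sum : ⟪μK, x⟫ + ⟪μK, y⟫ = ⟪μK, x + y⟫ := (inner_add_right _ _ _).symm
      have hR2 : ‖R‖ ^ 2 = ⟪Bu, R⟫
          - (∫ ξ in K \ {0}, g ξ / ‖ξ‖ ^ 2 ∂(p.ν x))
          + (∫ ξ in K \ {0}, g ξ / ‖ξ‖ ^ 2 ∂(p.ν y)) := by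
        have : ⟪R, R⟫ = ⟪R, x⟫ - ⟪R, y⟫ := by
          rw [hReq]
          simp only [inner_sub_left, inner_sub_right]
          try ring
        rw [← real_inner_self_eq_norm_sq, this, hRφ x hx, hRφ y hy, hφ]
        simp only [hBu]
        have : ⟪Bu, R⟫ = ⟪Bu, x⟫ - ⟪Bu, y⟫ := by rw [hReq, inner_sub_right]
        rw [hBu] at this
        rw [this]
        ring
      have hμsum : ⟪μK, x + y⟫ ≤ ‖μK‖ * ‖R‖ := by
        calc ⟪μK, x + y⟫ ≤ ‖μK‖ * ‖x + y‖ := real_inner_le_norm _ _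
          _ = ‖μK‖ * ‖R‖ := by rw [hnormeq]
      have hBuR : ⟪Bu, R⟫ ≤ ‖Bu‖ * ‖R‖ := real_inner_le_norm _ _
      have hBunorm : ‖Bu‖ ≤ ‖ContinuousLinearMap.adjoint p.B‖ * ‖u‖ :=
        ContinuousLinearMap.le_opNorm _ _
      set C : ℝ := ‖ContinuousLinearMap.adjoint p.B‖ * ‖u‖ + (1 + ‖u‖ ^ 2) * ‖μK‖ with hC
      have hnR : 0 ≤ ‖R‖ := norm_nonneg R
      have e1 : ‖R‖ ^ 2 ≤ ‖Bu‖ * ‖R‖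
          + ((1 + ‖u‖ ^ 2) * ⟪μK, x⟫ + (1 + ‖u‖ ^ 2) * ⟪μK, y⟫) := by
        have hax := abs_le.1 hIx
        have hay := abs_le.1 hIy
        rw [hR2]
        linarith [hBuR]
      have e2 : (1 + ‖u‖ ^ 2) * ⟪μK, x⟫ + (1 + ‖u‖ ^ 2) * ⟪μK, y⟫
          = (1 + ‖u‖ ^ 2) * ⟪μK, x + y⟫ := by rw [← hinner_sum]; ring
      have e3 : (1 + ‖u‖ ^ 2) * ⟪μK, x + y⟫ ≤ (1 + ‖u‖ ^ 2) * (‖μK‖ * ‖R‖) :=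
        mul_le_mul_of_nonneg_left hμsum hu2.le
      have e4 : ‖Bu‖ * ‖R‖ ≤ ‖ContinuousLinearMap.adjoint p.B‖ * ‖u‖ * ‖R‖ :=
        mul_le_mul_of_nonneg_right hBunorm hnR
      have hkey : ‖R‖ ^ 2 ≤ C * ‖R‖ := by
        calc ‖R‖ ^ 2 ≤ ‖Bu‖ * ‖R‖ + (1 + ‖u‖ ^ 2) * ⟪μK, x + y⟫ := by linarith [e1, e2]
          _ ≤ ‖ContinuousLinearMap.adjoint p.B‖ * ‖u‖ * ‖R‖
              + (1 + ‖u‖ ^ 2) * (‖μK‖ * ‖R‖) := by linarith [e3, e4]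
          _ = C * ‖R‖ := by rw [hC]; ring
      have hub : ‖u‖ ≤ 1 + ‖u‖ ^ 2 := by nlinarith [sq_nonneg (‖u‖ - 1)]
      have hC2 : C ≤ (‖ContinuousLinearMap.adjoint p.B‖ + ‖μK‖) * (1 + ‖u‖ ^ 2) := by
        rw [hC]
        nlinarith [mul_le_mul_of_nonneg_left hub
          (norm_nonneg (ContinuousLinearMap.adjoint p.B)), norm_nonneg μK]
      rcases eq_or_lt_of_le hnR with h0 | h0
      · rw [← h0]
        positivity
      · have h1 : ‖R‖ ≤ C := by
          refine (mul_le_mul_iff_of_pos_right h0).1 ?_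
          calc ‖R‖ * ‖R‖ = ‖R‖ ^ 2 := (pow_two _).symm
            _ ≤ C * ‖R‖ := hkey
        exact h1.trans hC2
end
end

section
/- Let (b, B, m, μ) be an admissible parameter set. Then for every k ∈ ℕ and every u ∈ K one has ‖R^{(k)}(u) − R(u)‖ ≤ ‖μ({ξ ∈ K : 0 < ‖ξ‖ ≤ 1/k})‖ · ‖u‖². Consequently, for every M > 0, sup over u ∈ K with ‖u‖ ≤ M of ‖R^{(k)}(u) − R(u)‖ tends to 0 as k → ∞. -/
open MeasureTheory Filter
open scoped RealInnerProductSpace Topology ENNReal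

noncomputable section

lemma exp_taylor_lb (t : ℝ) : 0 ≤ Real.exp (-t) - 1 + t := by
  have := Real.add_one_le_exp (-t); linarith

lemma exp_taylor_ub (t : ℝ) (ht : 0 ≤ t) : Real.exp (-t) - 1 + t ≤ t ^ 2 := by
  have h1 : t + 1 ≤ Real.exp t := Real.add_one_le_exp t
  have h2 : Real.exp (-t) * Real.exp t = 1 := by
    rw [← Real.exp_add]; simp
  have h0 : Real.exp (-t) * (1 + t) ≤ 1 := by
    nlinarith [Real.exp_nonneg (-t)]
  nlinarith [Real.exp_nonneg (-t)]

/-- `‖R^{(k)}(u) − R(u)‖ ≤ ‖μ({ξ ∈ K : 0 < ‖ξ‖ ≤ 1/k})‖ ‖u‖²`, and the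
supremum of `‖R^{(k)} − R‖` over norm-bounded subsets of `K` tends to `0` as `k → ∞`. -/
theorem stmt_5 {H : Type*} [NormedAddCommGroup H] [InnerProductSpace ℝ H] [CompleteSpace H]
    [MeasurableSpace H] [BorelSpace H] (K : Set H)
    (hK : IsSelfDualCone K) (hKgen : ∀ z : H, ∃ x ∈ K, ∃ y ∈ K, z = x - y)
    (p : AdmissibleParams H K)
    (R : H → H)
    (hR : ∀ u ∈ K, ∀ x ∈ K, ⟪R u, x⟫ =
      ⟪ContinuousLinearMap.adjoint p.B u, x⟫
        - ∫ ξ in K \ {0}, (Real.exp (-⟪ξ, u⟫) - 1 + ⟪trunc ξ, u⟫) / ‖ξ‖ ^ 2 ∂(p.ν x))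
    (Rk : ℕ → H → H)
    (hRk : ∀ k : ℕ, 0 < k → ∀ u ∈ K, ∀ x ∈ K, ⟪Rk k u, x⟫ =
      ⟪ContinuousLinearMap.adjoint p.B u, x⟫
        - ∫ ξ in (K \ {0}) ∩ {ξ : H | 1 / (k : ℝ) < ‖ξ‖},
            (Real.exp (-⟪ξ, u⟫) - 1 + ⟪trunc ξ, u⟫) / ‖ξ‖ ^ 2 ∂(p.ν x)) :
    (∀ k : ℕ, 0 < k → ∀ u ∈ K,
      ‖Rk k u - R u‖ ≤ ‖p.muVec {ξ : H | ξ ∈ K ∧ 0 < ‖ξ‖ ∧ ‖ξ‖ ≤ 1 / (k : ℝ)}‖ * ‖u‖ ^ 2) ∧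
    (∀ M : ℝ, 0 < M →
      Filter.Tendsto (fun k : ℕ => ⨆ u : {u : H // u ∈ K ∧ ‖u‖ ≤ M}, ‖Rk k u.1 - R u.1‖)
        Filter.atTop (𝓝 0)) := by
  -- basic facts about the self-dual cone
  have hmemiff : ∀ x : H, x ∈ K ↔ ∀ y ∈ K, 0 ≤ ⟪x, y⟫ := by
    intro x
    constructor
    · intro hx
      have : x ∈ {x : H | ∀ y ∈ K, 0 ≤ ⟪x, y⟫} := hK ▸ hx
      exact this
    · intro h
      show x ∈ K
      rw [hK]; exact h
  have hKnn : ∀ x ∈ K, ∀ y ∈ K, 0 ≤ ⟪x, y⟫ := fun x hx => (hmemiff x).1 hx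
  have hKmem : ∀ x : H, (∀ y ∈ K, 0 ≤ ⟪x, y⟫) → x ∈ K := fun x => (hmemiff x).2
  have hKms : MeasurableSet K := by
    have hc : IsClosed K := by
      rw [hK]
      have h1 : {x : H | ∀ y ∈ K, 0 ≤ ⟪x, y⟫} = ⋂ y ∈ K, {x : H | 0 ≤ ⟪x, y⟫} := by
        ext x; simp
      rw [h1]
      exact isClosed_biInter fun y _ =>
        isClosed_le continuous_const (continuous_id.inner continuous_const)
    exact hc.measurableSet
  have hA : MeasurableSet (K \ {0} : Set H) := hKms.diff (measurableSet_singleton 0)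
  have htrunc : Measurable (trunc : H → H) := by
    have h : (trunc : H → H) = fun ξ => if ‖ξ‖ ≤ 1 then ξ else 0 := rfl
    rw [h]
    exact Measurable.ite (measurableSet_le measurable_norm measurable_const)
      measurable_id measurable_const
  have hg_meas : ∀ u : H,
      Measurable (fun ξ : H => (Real.exp (-⟪ξ, u⟫) - 1 + ⟪trunc ξ, u⟫) / ‖ξ‖ ^ 2) := by
    intro u
    have h1 : Measurable fun ξ : H => ⟪ξ, u⟫ :=
      (continuous_id.inner continuous_const).measurable
    have hcont : Continuous fun z : H => ⟪z, u⟫ := continuous_id.inner continuous_const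
    have h2 : Measurable fun ξ : H => ⟪trunc ξ, u⟫ := hcont.measurable.comp htrunc
    exact (((Real.measurable_exp.comp h1.neg).sub measurable_const).add h2).div
      (measurable_norm.pow_const 2)
  have hg_bound : ∀ u ∈ K, ∀ ξ ∈ (K \ {0} : Set H),
      |(Real.exp (-⟪ξ, u⟫) - 1 + ⟪trunc ξ, u⟫) / ‖ξ‖ ^ 2| ≤ max 1 (‖u‖ ^ 2) := by
    intro u hu ξ hξ
    have hξ0 : (0:ℝ) < ‖ξ‖ := by
      have : ξ ≠ 0 := hξ.2
      simpa [norm_pos_iff] using this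
    have ht : 0 ≤ ⟪ξ, u⟫ := hKnn ξ hξ.1 u hu
    have hcs0 : |⟪ξ, u⟫| ≤ ‖ξ‖ * ‖u‖ := abs_real_inner_le_norm ξ u
    have hcs : ⟪ξ, u⟫ ^ 2 ≤ ‖ξ‖ ^ 2 * ‖u‖ ^ 2 := by
      nlinarith [abs_nonneg ⟪ξ, u⟫, sq_abs ⟪ξ, u⟫, norm_nonneg ξ, norm_nonneg u]
    by_cases h1 : ‖ξ‖ ≤ 1
    · have htr : trunc ξ = ξ := if_pos h1
      rw [htr, abs_of_nonneg (div_nonneg (exp_taylor_lb _) (by positivity))]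
      have hub := exp_taylor_ub ⟪ξ, u⟫ ht
      have : (Real.exp (-⟪ξ, u⟫) - 1 + ⟪ξ, u⟫) / ‖ξ‖ ^ 2 ≤ ‖u‖ ^ 2 := by
        rw [div_le_iff₀ (by positivity)]
        nlinarith
      exact this.trans (le_max_right _ _)
    · have htr : trunc ξ = 0 := if_neg h1
      rw [htr]
      simp only [inner_zero_left, add_zero]
      have hle : |Real.exp (-⟪ξ, u⟫) - 1| ≤ 1 := by
        rw [abs_le]
        constructor
        · have := Real.exp_nonneg (-⟪ξ, u⟫); linarith
        · have : Real.exp (-⟪ξ, u⟫) ≤ 1 := Real.exp_le_one_iff.mpr (by linarith)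
          linarith
      have h2 : (1:ℝ) ≤ ‖ξ‖ ^ 2 := by nlinarith [not_le.mp h1]
      rw [abs_div, abs_of_nonneg (le_of_lt (by positivity : (0:ℝ) < ‖ξ‖ ^ 2))]
      refine ((div_le_one (by positivity)).mpr (hle.trans h2)).trans (le_max_left _ _)
  have hg_int : ∀ u ∈ K, ∀ x ∈ K, IntegrableOn
      (fun ξ : H => (Real.exp (-⟪ξ, u⟫) - 1 + ⟪trunc ξ, u⟫) / ‖ξ‖ ^ 2) (K \ {0}) (p.ν x) := by
    intro u hu x hx
    haveI := p.ν_finite x hx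
    refine ⟨(hg_meas u).aestronglyMeasurable, ?_⟩
    apply HasFiniteIntegral.of_bounded (C := max 1 (‖u‖ ^ 2))
    filter_upwards [ae_restrict_mem hA] with ξ hξ
    simpa only [Real.norm_eq_abs] using hg_bound u hu ξ hξ
  -- measurability of the small sets
  have hSk : ∀ k : ℕ, MeasurableSet {ξ : H | ξ ∈ K ∧ 0 < ‖ξ‖ ∧ ‖ξ‖ ≤ 1 / (k : ℝ)} := by
    intro k
    exact hKms.inter ((measurableSet_lt measurable_const measurable_norm).inter
      (measurableSet_le measurable_norm measurable_const))
  -- part 1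
  have part1 : ∀ k : ℕ, 0 < k → ∀ u ∈ K,
      ‖Rk k u - R u‖ ≤ ‖p.muVec {ξ : H | ξ ∈ K ∧ 0 < ‖ξ‖ ∧ ‖ξ‖ ≤ 1 / (k : ℝ)}‖ * ‖u‖ ^ 2 := by
    intro k hk u hu
    have hk1 : (1:ℝ) ≤ (k:ℝ) := by exact_mod_cast hk
    have hkpos : (0:ℝ) < (k:ℝ) := by linarith
    have h1k : 1 / (k:ℝ) ≤ 1 := by
      rw [div_le_one hkpos]; exact hk1
    have hsplit : (K \ {0} : Set H) =
        {ξ : H | ξ ∈ K ∧ 0 < ‖ξ‖ ∧ ‖ξ‖ ≤ 1 / (k:ℝ)} ∪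
          ((K \ {0}) ∩ {ξ : H | 1 / (k:ℝ) < ‖ξ‖}) := by
      ext ξ
      simp only [Set.mem_diff, Set.mem_singleton_iff, Set.mem_union, Set.mem_setOf_eq,
        Set.mem_inter_iff]
      constructor
      · rintro ⟨h1, h2⟩
        rcases le_or_gt ‖ξ‖ (1 / (k:ℝ)) with h | h
        · exact Or.inl ⟨h1, norm_pos_iff.mpr h2, h⟩
        · exact Or.inr ⟨⟨h1, h2⟩, h⟩
      · rintro (⟨h1, h2, _⟩ | ⟨h1, _⟩)
        · exact ⟨h1, norm_pos_iff.mp h2⟩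
        · exact h1
    have hdisj : Disjoint {ξ : H | ξ ∈ K ∧ 0 < ‖ξ‖ ∧ ‖ξ‖ ≤ 1 / (k:ℝ)}
        ((K \ {0}) ∩ {ξ : H | 1 / (k:ℝ) < ‖ξ‖}) := by
      rw [Set.disjoint_left]
      rintro ξ ⟨_, _, h3⟩ ⟨_, h4⟩
      exact absurd h4 (not_lt.mpr h3)
    have hsub1 : {ξ : H | ξ ∈ K ∧ 0 < ‖ξ‖ ∧ ‖ξ‖ ≤ 1 / (k:ℝ)} ⊆ (K \ {0} : Set H) := by
      rintro ξ ⟨h1, h2, _⟩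
      exact ⟨h1, norm_pos_iff.mp h2⟩
    have hsub2 : (K \ {0} : Set H) ∩ {ξ : H | 1 / (k:ℝ) < ‖ξ‖} ⊆ (K \ {0} : Set H) :=
      Set.inter_subset_left
    have hinner : ∀ x ∈ K, ⟪Rk k u - R u, x⟫ =
        ∫ ξ in {ξ : H | ξ ∈ K ∧ 0 < ‖ξ‖ ∧ ‖ξ‖ ≤ 1 / (k:ℝ)},
          (Real.exp (-⟪ξ, u⟫) - 1 + ⟪trunc ξ, u⟫) / ‖ξ‖ ^ 2 ∂(p.ν x) := by
      intro x hx
      have hint := hg_int u hu x hx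
      have hu1 := hint.mono_set hsub1
      have hu2 := hint.mono_set hsub2
      have e1 : ∫ ξ in K \ {0},
            (Real.exp (-⟪ξ, u⟫) - 1 + ⟪trunc ξ, u⟫) / ‖ξ‖ ^ 2 ∂(p.ν x)
          = (∫ ξ in {ξ : H | ξ ∈ K ∧ 0 < ‖ξ‖ ∧ ‖ξ‖ ≤ 1 / (k:ℝ)},
              (Real.exp (-⟪ξ, u⟫) - 1 + ⟪trunc ξ, u⟫) / ‖ξ‖ ^ 2 ∂(p.ν x))
            + ∫ ξ in (K \ {0}) ∩ {ξ : H | 1 / (k:ℝ) < ‖ξ‖},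
              (Real.exp (-⟪ξ, u⟫) - 1 + ⟪trunc ξ, u⟫) / ‖ξ‖ ^ 2 ∂(p.ν x) := by
        conv_lhs => rw [hsplit]
        exact setIntegral_union hdisj
          (hA.inter (measurableSet_lt measurable_const measurable_norm)) hu1 hu2
      rw [inner_sub_left, hRk k hk u hu x hx, hR u hu x hx, e1]
      ring
    set v : H := p.muVec {ξ : H | ξ ∈ K ∧ 0 < ‖ξ‖ ∧ ‖ξ‖ ≤ 1 / (k:ℝ)} with hv
    have hvK : v ∈ K := p.muVec_mem _ (hSk k)
    have hpos : ∀ x ∈ K, 0 ≤ ⟪Rk k u - R u, x⟫ := by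
      intro x hx
      rw [hinner x hx]
      apply setIntegral_nonneg (hSk k)
      rintro ξ ⟨hξK, hξpos, hξle⟩
      have htr : trunc ξ = ξ := if_pos (hξle.trans h1k)
      rw [htr]
      exact div_nonneg (exp_taylor_lb _) (by positivity)
    have hup : ∀ x ∈ K, ⟪Rk k u - R u, x⟫ ≤ ⟪v, x⟫ * ‖u‖ ^ 2 := by
      intro x hx
      haveI := p.ν_finite x hx
      rw [hinner x hx, hv, p.muVec_spec _ (hSk k) x hx]
      have hmono : ∫ ξ in {ξ : H | ξ ∈ K ∧ 0 < ‖ξ‖ ∧ ‖ξ‖ ≤ 1 / (k:ℝ)},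
            (Real.exp (-⟪ξ, u⟫) - 1 + ⟪trunc ξ, u⟫) / ‖ξ‖ ^ 2 ∂(p.ν x)
          ≤ ∫ _ξ in {ξ : H | ξ ∈ K ∧ 0 < ‖ξ‖ ∧ ‖ξ‖ ≤ 1 / (k:ℝ)}, (‖u‖ ^ 2) ∂(p.ν x) := by
        apply setIntegral_mono_on ((hg_int u hu x hx).mono_set hsub1)
          (integrableOn_const (measure_ne_top _ _)) (hSk k)
        rintro ξ ⟨hξK, hξpos, hξle⟩
        have htr : trunc ξ = ξ := if_pos (hξle.trans h1k)
        rw [htr]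
        have ht : 0 ≤ ⟪ξ, u⟫ := hKnn ξ hξK u hu
        have hub := exp_taylor_ub ⟪ξ, u⟫ ht
        have hcs0 : |⟪ξ, u⟫| ≤ ‖ξ‖ * ‖u‖ := abs_real_inner_le_norm ξ u
        have hcs : ⟪ξ, u⟫ ^ 2 ≤ ‖ξ‖ ^ 2 * ‖u‖ ^ 2 := by
          nlinarith [abs_nonneg ⟪ξ, u⟫, sq_abs ⟪ξ, u⟫, norm_nonneg ξ, norm_nonneg u]
        rw [div_le_iff₀ (by positivity)]
        nlinarith
      have hconst : ∫ _ξ in {ξ : H | ξ ∈ K ∧ 0 < ‖ξ‖ ∧ ‖ξ‖ ≤ 1 / (k:ℝ)},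
          (‖u‖ ^ 2) ∂(p.ν x)
          = (p.ν x {ξ : H | ξ ∈ K ∧ 0 < ‖ξ‖ ∧ ‖ξ‖ ≤ 1 / (k:ℝ)}).toReal * ‖u‖ ^ 2 := by
        rw [setIntegral_const, smul_eq_mul]; rfl
      linarith
    have hwK : Rk k u - R u ∈ K := hKmem _ hpos
    have hvwK : (‖u‖ ^ 2) • v - (Rk k u - R u) ∈ K := by
      apply hKmem
      intro y hy
      rw [inner_sub_left, real_inner_smul_left]
      have h := hup y hy
      rw [mul_comm] at h
      linarith
    have hnormle : ‖Rk k u - R u‖ ≤ ‖(‖u‖ ^ 2) • v‖ := by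
      have h1 : 0 ≤ ⟪Rk k u - R u, (‖u‖ ^ 2) • v - (Rk k u - R u)⟫ := hKnn _ hwK _ hvwK
      have h2 : ⟪Rk k u - R u, (‖u‖ ^ 2) • v⟫
          ≤ ‖Rk k u - R u‖ * ‖(‖u‖ ^ 2) • v‖ := real_inner_le_norm _ _
      have h3 : ⟪Rk k u - R u, (‖u‖ ^ 2) • v - (Rk k u - R u)⟫
          = ⟪Rk k u - R u, (‖u‖ ^ 2) • v⟫ - ⟪Rk k u - R u, Rk k u - R u⟫ :=
        inner_sub_right _ _ _
      have h4 : ⟪Rk k u - R u, Rk k u - R u⟫ = ‖Rk k u - R u‖ ^ 2 :=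
        real_inner_self_eq_norm_sq _
      rcases eq_or_lt_of_le (norm_nonneg (Rk k u - R u)) with h | h
      · rw [← h]; exact norm_nonneg _
      · have h5 : ‖Rk k u - R u‖ * ‖Rk k u - R u‖
            ≤ ‖Rk k u - R u‖ * ‖(‖u‖ ^ 2) • v‖ := by nlinarith
        exact le_of_mul_le_mul_left h5 h
    calc ‖Rk k u - R u‖ ≤ ‖(‖u‖ ^ 2) • v‖ := hnormle
      _ = ‖v‖ * ‖u‖ ^ 2 := by
          rw [norm_smul, Real.norm_eq_abs, abs_of_nonneg (sq_nonneg _), mul_comm]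
  refine ⟨part1, ?_⟩
  -- part 2
  intro M hM
  have haK : ∀ n : ℕ, p.muVec {ξ : H | ξ ∈ K ∧ 0 < ‖ξ‖ ∧ ‖ξ‖ ≤ 1 / (n:ℝ)} ∈ K :=
    fun n => p.muVec_mem _ (hSk n)
  set a : ℕ → H := fun n => p.muVec {ξ : H | ξ ∈ K ∧ 0 < ‖ξ‖ ∧ ‖ξ‖ ≤ 1 / (n:ℝ)} with ha
  haveI hfin1 : IsFiniteMeasure (p.ν (a 1)) := p.ν_finite _ (haK 1)
  have hsub : ∀ n : ℕ, 1 ≤ n →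
      {ξ : H | ξ ∈ K ∧ 0 < ‖ξ‖ ∧ ‖ξ‖ ≤ 1 / (n:ℝ)}
        ⊆ {ξ : H | ξ ∈ K ∧ 0 < ‖ξ‖ ∧ ‖ξ‖ ≤ 1 / ((1:ℕ):ℝ)} := by
    rintro n hn ξ ⟨h1, h2, h3⟩
    refine ⟨h1, h2, h3.trans ?_⟩
    apply one_div_le_one_div_of_le (by norm_num)
    exact_mod_cast hn
  have hnormsq : ∀ n : ℕ, 1 ≤ n →
      ‖a n‖ ^ 2 ≤ (p.ν (a 1) {ξ : H | ξ ∈ K ∧ 0 < ‖ξ‖ ∧ ‖ξ‖ ≤ 1 / (n:ℝ)}).toReal := by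
    intro n hn
    have h1 : a 1 - a n ∈ K := by
      apply hKmem
      intro y hy
      haveI := p.ν_finite y hy
      rw [inner_sub_left, ha]
      simp only []
      rw [p.muVec_spec _ (hSk 1) y hy, p.muVec_spec _ (hSk n) y hy]
      have hle : p.ν y {ξ : H | ξ ∈ K ∧ 0 < ‖ξ‖ ∧ ‖ξ‖ ≤ 1 / (n:ℝ)}
          ≤ p.ν y {ξ : H | ξ ∈ K ∧ 0 < ‖ξ‖ ∧ ‖ξ‖ ≤ 1 / ((1:ℕ):ℝ)} :=
        measure_mono (hsub n hn)
      have := ENNReal.toReal_mono (measure_ne_top _ _) hle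
      linarith
    have h2 : 0 ≤ ⟪a n, a 1 - a n⟫ := hKnn _ (haK n) _ h1
    have h3 : ⟪a n, a 1⟫ =
        (p.ν (a 1) {ξ : H | ξ ∈ K ∧ 0 < ‖ξ‖ ∧ ‖ξ‖ ≤ 1 / (n:ℝ)}).toReal :=
      p.muVec_spec _ (hSk n) _ (haK 1)
    have h4 : ⟪a n, a n⟫ = ‖a n‖ ^ 2 := real_inner_self_eq_norm_sq _
    have h5 : ⟪a n, a 1 - a n⟫ = ⟪a n, a 1⟫ - ⟪a n, a n⟫ := inner_sub_right _ _ _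
    linarith
  have hmono : Antitone (fun n : ℕ =>
      {ξ : H | ξ ∈ K ∧ 0 < ‖ξ‖ ∧ ‖ξ‖ ≤ 1 / ((n+1 : ℕ):ℝ)}) := by
    intro i j hij ξ hξ
    refine ⟨hξ.1, hξ.2.1, hξ.2.2.trans ?_⟩
    apply one_div_le_one_div_of_le (by positivity)
    exact_mod_cast Nat.succ_le_succ hij
  have hinter : (⋂ n : ℕ, {ξ : H | ξ ∈ K ∧ 0 < ‖ξ‖ ∧ ‖ξ‖ ≤ 1 / ((n+1 : ℕ):ℝ)})
      = (∅ : Set H) := by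
    ext ξ
    simp only [Set.mem_iInter, Set.mem_empty_iff_false, iff_false]
    intro h
    obtain ⟨n, hn⟩ := exists_nat_one_div_lt (h 0).2.1
    have := (h n).2.2
    have hcast : ((n+1 : ℕ):ℝ) = (n:ℝ) + 1 := by push_cast; ring
    rw [hcast] at this
    exact absurd this (not_le.mpr hn)
  have htm : Tendsto (fun n : ℕ =>
      p.ν (a 1) {ξ : H | ξ ∈ K ∧ 0 < ‖ξ‖ ∧ ‖ξ‖ ≤ 1 / ((n+1 : ℕ):ℝ)}) atTop (𝓝 0) := by
    have h := tendsto_measure_iInter_atTop (μ := p.ν (a 1))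
      (s := fun n : ℕ => {ξ : H | ξ ∈ K ∧ 0 < ‖ξ‖ ∧ ‖ξ‖ ≤ 1 / ((n+1 : ℕ):ℝ)})
      (fun n => (hSk (n+1)).nullMeasurableSet) hmono ⟨0, measure_ne_top _ _⟩
    rwa [hinter, measure_empty] at h
  have htoReal : Tendsto (fun n : ℕ =>
      (p.ν (a 1) {ξ : H | ξ ∈ K ∧ 0 < ‖ξ‖ ∧ ‖ξ‖ ≤ 1 / ((n+1 : ℕ):ℝ)}).toReal)
      atTop (𝓝 0) := by
    have h := (ENNReal.tendsto_toReal (by simp : (0:ℝ≥0∞) ≠ ⊤)).comp htm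
    rw [ENNReal.toReal_zero] at h
    exact h
  have hnormsq2 : Tendsto (fun n : ℕ => ‖a (n+1)‖ ^ 2) atTop (𝓝 0) :=
    squeeze_zero (fun n => by positivity)
      (fun n => hnormsq (n+1) (Nat.le_add_left 1 n)) htoReal
  have hnorm : Tendsto (fun n : ℕ => ‖a (n+1)‖) atTop (𝓝 0) := by
    have h := (Real.continuous_sqrt.tendsto 0).comp hnormsq2
    rw [Real.sqrt_zero] at h
    have he : (fun n : ℕ => ‖a (n+1)‖)
        = fun n : ℕ => Real.sqrt (‖a (n+1)‖ ^ 2) :=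
      funext fun n => (Real.sqrt_sq (norm_nonneg _)).symm
    rw [he]
    exact h
  have hnorm' : Tendsto (fun n : ℕ => ‖a n‖) atTop (𝓝 0) :=
    (tendsto_add_atTop_iff_nat 1).mp hnorm
  have hc : Tendsto (fun n : ℕ => ‖a n‖ * M ^ 2) atTop (𝓝 0) := by
    simpa using hnorm'.mul_const (M ^ 2)
  apply squeeze_zero'
    (g := fun n : ℕ => ‖a n‖ * M ^ 2) ?_ ?_ hc
  · filter_upwards with k
    exact Real.iSup_nonneg fun u => norm_nonneg _
  · filter_upwards [eventually_ge_atTop 1] with k hk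
    apply Real.iSup_le _ (by positivity)
    intro u
    refine (part1 k hk u.1 u.2.1).trans ?_
    apply mul_le_mul_of_nonneg_left _ (norm_nonneg _)
    calc ‖u.1‖ ^ 2 ≤ M ^ 2 := pow_le_pow_left₀ (norm_nonneg _) u.2.2 2
end
end
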